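/- Let {Δ_k} be a non-negative, monotone non-increasing real sequence converging to 0 and suppose there exist θ ∈ (1/2, 1) and c̃ > 0 such that Δ_{k+1}^{2θ} ≤ c̃ (Δ_{k-1} − Δ_{k+1}) for all k ≥ 1. Then there exists C > 0 such that Δ_k ≤ C · k^{−1/(2θ−1)} for all k ≥ 1. -/

import Mathlib

theorem stmt1 (Δ : ℕ → ℝ) (hnn : ∀ k, 0 ≤ Δ k) (hmono : ∀ k, Δ (k+1) ≤ Δ k)
    (hlim : Filter.Tendsto Δ Filter.atTop (nhds 0))
    (θ c : ℝ) (hθ0 : 1/2 < θ) (hθ1 : θ < 1) (hc : 0 < c)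
    (hrec : ∀ k : ℕ, 1 ≤ k → (Δ (k+1)) ^ (2*θ) ≤ c * (Δ (k-1) - Δ (k+1))) :
    ∃ C > 0, ∀ k : ℕ, 1 ≤ k → Δ k ≤ C * (k : ℝ) ^ (-(1/(2*θ - 1))) := by
  set α : ℝ := 2*θ - 1 with hαdef
  have hα0 : 0 < α := by simp only [hαdef]; linarith
  have hα1 : α < 1 := by simp only [hαdef]; linarith
  have hanti : Antitone Δ := antitone_nat_of_succ_le hmono
  have h2α : (1:ℝ) < 2 ^ α := by
    calc (1:ℝ) = (1:ℝ) ^ α := (Real.one_rpow α).symm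
    _ < 2 ^ α := Real.rpow_lt_rpow (by norm_num) one_lt_two hα0
  by_cases hz : ∃ N, Δ N = 0
  · -- degenerate case: Δ is eventually zero
    obtain ⟨N, hN⟩ := hz
    have hge : ∀ k, N ≤ k → Δ k = 0 := fun k hk =>
      le_antisymm (hN ▸ hanti hk) (hnn k)
    by_cases h1 : Δ 1 = 0
    · refine ⟨1, one_pos, fun k hk => ?_⟩
      have : Δ k = 0 := le_antisymm (h1 ▸ hanti hk) (hnn k)
      rw [this, one_mul]
      positivity
    · have h1pos : 0 < Δ 1 := lt_of_le_of_ne (hnn 1) (Ne.symm h1)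
      have hN1 : 1 < N := by
        by_contra h
        push_neg at h
        exact h1 (hge 1 h)
      have hNpos : (0:ℝ) < (N:ℝ) := by positivity
      refine ⟨Δ 1 * (N:ℝ) ^ (1/α), by positivity, fun k hk => ?_⟩
      rcases le_or_gt N k with hNk | hkN
      · rw [hge k hNk]
        have hkpos : (0:ℝ) < (k:ℝ) := by exact_mod_cast Nat.lt_of_lt_of_le (by omega) hNk
        positivity
      · have hkpos : (0:ℝ) < (k:ℝ) := by exact_mod_cast hk
        have hkle : (k:ℝ) ≤ (N:ℝ) := by exact_mod_cast hkN.le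
        have h1' : (N:ℝ) ^ (-(1/α)) ≤ (k:ℝ) ^ (-(1/α)) :=
          Real.rpow_le_rpow_of_nonpos hkpos hkle (neg_nonpos.2 (by positivity))
        have hNN : (N:ℝ) ^ (1/α) * (N:ℝ) ^ (-(1/α)) = 1 := by
          rw [← Real.rpow_add hNpos]; norm_num
        calc Δ k ≤ Δ 1 := hanti hk
        _ = Δ 1 * ((N:ℝ) ^ (1/α) * (N:ℝ) ^ (-(1/α))) := by rw [hNN, mul_one]
        _ = Δ 1 * (N:ℝ) ^ (1/α) * (N:ℝ) ^ (-(1/α)) := by ring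
        _ ≤ Δ 1 * (N:ℝ) ^ (1/α) * (k:ℝ) ^ (-(1/α)) := by
            apply mul_le_mul_of_nonneg_left h1' (by positivity)
  · -- main case: Δ k > 0 for all k
    push_neg at hz
    have hpos : ∀ k, 0 < Δ k := fun k => lt_of_le_of_ne (hnn k) (Ne.symm (hz k))
    set u : ℕ → ℝ := fun k => (Δ k) ^ (-α) with hu
    set μ : ℝ := min ((2:ℝ)^(-α) * (2^α - 1) / c) ((2^α - 1) * (Δ 0)^(-α)) with hμ
    have hμpos : 0 < μ := by
      apply lt_min
      · have : (0:ℝ) < (2:ℝ)^(-α) := Real.rpow_pos_of_pos (by norm_num) _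
        have h2 : (0:ℝ) < 2^α - 1 := by linarith
        positivity
      · have : (0:ℝ) < (Δ 0)^(-α) := Real.rpow_pos_of_pos (hpos 0) _
        have h2 : (0:ℝ) < 2^α - 1 := by linarith
        positivity
    -- the key step inequality
    have hstep : ∀ k, u k + μ ≤ u (k+2) := by
      intro k
      have hx : 0 < Δ (k+2) := hpos (k+2)
      have hy : 0 < Δ k := hpos k
      have hxy : Δ (k+2) ≤ Δ k := hanti (by omega)
      set x := Δ (k+2) with hxd
      set y := Δ k with hyd
      have hrec' : x ^ (2*θ) ≤ c * (y - x) := by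
        have := hrec (k+1) (by omega)
        simpa using this
      have h2θ : (2:ℝ)*θ = 1 + α := by simp only [hαdef]; ring
      have hxpow : x ^ (2*θ) = x * x ^ α := by
        rw [h2θ, Real.rpow_add hx, Real.rpow_one]
      have hdiff : x ^ α / c ≤ (y - x) / x := by
        rw [div_le_div_iff₀ hc hx]
        calc x ^ α * x = x * x ^ α := by ring
        _ = x ^ (2*θ) := hxpow.symm
        _ ≤ c * (y - x) := hrec'
        _ = (y - x) * c := by ring
      have hxα : 0 < x ^ α := Real.rpow_pos_of_pos hx _
      have hyα : 0 < y ^ (-α) := Real.rpow_pos_of_pos hy _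
      rcases le_or_gt (y/2) x with hcase | hcase
      · -- x ≥ y/2
        set r : ℝ := y / x with hrd
        have hr1 : 1 ≤ r := (one_le_div hx).2 hxy
        have hr2 : r ≤ 2 := by rw [div_le_iff₀ hx]; linarith
        have hrpos : (0:ℝ) < r := by linarith
        -- chord inequality from concavity
        have hchord : (2 - r) * 1 + (r - 1) * 2 ^ α ≤ r ^ α := by
          have := (Real.concaveOn_rpow hα0.le hα1.le).2
            (Set.mem_Ici.2 (by norm_num : (0:ℝ) ≤ 1))
            (Set.mem_Ici.2 (by norm_num : (0:ℝ) ≤ 2))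
            (by linarith : (0:ℝ) ≤ 2 - r) (by linarith : (0:ℝ) ≤ r - 1) (by ring)
          simp only [smul_eq_mul, Real.one_rpow] at this
          have harg : (2 - r) * 1 + (r - 1) * 2 = r := by ring
          rwa [harg] at this
        -- x^(-α) = y^(-α) * r^α
        have hxr : x * r = y := by rw [hrd]; field_simp
        have hrα : 0 < r ^ α := Real.rpow_pos_of_pos hrpos _
        have hxmy : x ^ (-α) = y ^ (-α) * r ^ α := by
          have h1 : y ^ (-α) = x ^ (-α) * r ^ (-α) := by
            rw [← Real.mul_rpow hx.le hrpos.le, hxr]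
          rw [h1, mul_assoc, ← Real.rpow_add hrpos]
          norm_num
        -- r - 1 ≥ x^α / c
        have hr1' : x ^ α / c ≤ r - 1 := by
          have : r - 1 = (y - x) / x := by rw [hrd]; field_simp
          rw [this]; exact hdiff
        -- (x/y)^α ≥ 2^(-α)
        have hxyα : (2:ℝ)^(-α) ≤ x ^ α * y ^ (-α) := by
          have h1 : x ^ α * y ^ (-α) = (x/y) ^ α := by
            rw [Real.div_rpow hx.le hy.le, Real.rpow_neg hy.le, div_eq_mul_inv]
          have h2 : (2:ℝ)^(-α) = ((2:ℝ)⁻¹) ^ α := by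
            rw [Real.rpow_neg (by norm_num : (0:ℝ) ≤ 2), ← Real.inv_rpow (by norm_num : (0:ℝ) ≤ 2)]
          have h3 : (2:ℝ)⁻¹ ≤ x / y := by
            rw [le_div_iff₀ hy]
            linarith
          rw [h1, h2]
          exact Real.rpow_le_rpow (by norm_num) h3 hα0.le
        have key : y ^ (-α) * ((r - 1) * (2^α - 1)) ≤ u (k+2) - u k := by
          have : u (k+2) - u k = y ^ (-α) * (r ^ α - 1) := by
            simp only [hu]
            rw [← hxd, ← hyd, hxmy]; ring
          rw [this]
          apply mul_le_mul_of_nonneg_left _ hyα.le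
          nlinarith [hchord]
        have key2 : (2:ℝ)^(-α) * (2^α - 1) / c ≤ u (k+2) - u k := by
          calc (2:ℝ)^(-α) * (2^α - 1) / c
              ≤ (x ^ α * y ^ (-α)) * (2^α - 1) / c := by
                gcongr
          _ = y ^ (-α) * ((x ^ α / c) * (2^α - 1)) := by ring
          _ ≤ y ^ (-α) * ((r - 1) * (2^α - 1)) := by
                apply mul_le_mul_of_nonneg_left _ hyα.le
                apply mul_le_mul_of_nonneg_right hr1' (by linarith)
          _ ≤ u (k+2) - u k := key
        have := min_le_left ((2:ℝ)^(-α) * (2^α - 1) / c) ((2^α - 1) * (Δ 0)^(-α))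
        simp only [← hμ] at this
        linarith
      · -- x < y/2
        have hle : x ≤ y / 2 := hcase.le
        have h1 : (y/2) ^ (-α) ≤ x ^ (-α) :=
          Real.rpow_le_rpow_of_nonpos hx hle (by linarith)
        have h2 : (y/2) ^ (-α) = y ^ (-α) * 2 ^ α := by
          rw [Real.div_rpow hy.le (by norm_num : (0:ℝ) ≤ 2), Real.rpow_neg (by norm_num : (0:ℝ) ≤ 2),
            div_eq_mul_inv, inv_inv]
        have h3 : (Δ 0) ^ (-α) ≤ y ^ (-α) :=
          Real.rpow_le_rpow_of_nonpos hy (hanti (Nat.zero_le k)) (by linarith)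
        have key2 : (2^α - 1) * (Δ 0)^(-α) ≤ u (k+2) - u k := by
          have hdiff2 : y ^ (-α) * (2^α - 1) ≤ u (k+2) - u k := by
            have : u (k+2) - u k = x ^ (-α) - y ^ (-α) := by simp only [hu]; rfl
            rw [this]
            nlinarith [h1, h2]
          calc (2^α - 1) * (Δ 0)^(-α) ≤ (2^α - 1) * y ^ (-α) := by
                apply mul_le_mul_of_nonneg_left h3 (by linarith)
          _ = y ^ (-α) * (2^α - 1) := by ring
          _ ≤ u (k+2) - u k := hdiff2
        have := min_le_right ((2:ℝ)^(-α) * (2^α - 1) / c) ((2^α - 1) * (Δ 0)^(-α))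
        simp only [← hμ] at this
        linarith
    -- iterate: u (j + 2m) ≥ u j + m μ
    have hiter : ∀ m j, u j + m * μ ≤ u (j + 2*m) := by
      intro m
      induction m with
      | zero => intro j; simp
      | succ n ih =>
        intro j
        have h1 := ih j
        have h2 := hstep (j + 2*n)
        have : j + 2*(n+1) = (j + 2*n) + 2 := by ring
        rw [this]
        push_cast
        push_cast at h1
        linarith
    have hupos : ∀ k, 0 ≤ u k := fun k => (Real.rpow_pos_of_pos (hpos k) _).le
    -- linear growth of u
    have hlin : ∀ k : ℕ, 2 ≤ k → (μ/4) * k ≤ u k := by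
      intro k hk
      have hdm : k = k % 2 + 2 * (k / 2) := (Nat.mod_add_div k 2).symm
      have h1 := hiter (k / 2) (k % 2)
      rw [← hdm] at h1
      have h2 := hupos (k % 2)
      have h3 : (k:ℝ) ≤ 2 * (k/2 : ℕ) + 1 := by
        have : k ≤ 2 * (k/2) + 1 := by omega
        exact_mod_cast this
      have h4 : (2:ℝ) ≤ (k:ℝ) := by exact_mod_cast hk
      have h5 : (k:ℝ)/4 ≤ ((k/2 : ℕ) : ℝ) := by linarith
      calc (μ/4) * k = μ * (k/4) := by ring
      _ ≤ μ * ((k/2 : ℕ) : ℝ) := by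
          apply mul_le_mul_of_nonneg_left h5 hμpos.le
      _ = ((k/2 : ℕ) : ℝ) * μ := by ring
      _ ≤ u k := by linarith
    set ν : ℝ := μ / 4 with hν
    have hνpos : 0 < ν := by positivity
    -- conclude
    refine ⟨max (Δ 1 + 1) (ν ^ (-(1/α))), lt_max_of_lt_left (by linarith [hpos 1]), fun k hk => ?_⟩
    rcases eq_or_lt_of_le hk with h1 | h2
    · rw [← h1]
      push_cast
      rw [Real.one_rpow, mul_one]
      calc Δ 1 ≤ Δ 1 + 1 := by linarith
      _ ≤ _ := le_max_left _ _
    · have hk2 : 2 ≤ k := h2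
      have hkpos : (0:ℝ) < (k:ℝ) := by positivity
      have hνk : 0 < ν * k := by positivity
      have h3 : ν * k ≤ (Δ k) ^ (-α) := by
        have := hlin k hk2
        rw [hν]
        calc μ/4 * k ≤ u k := this
        _ = (Δ k) ^ (-α) := rfl
      have h4 : ((Δ k) ^ (-α)) ^ (-(1/α)) ≤ (ν * k) ^ (-(1/α)) :=
        Real.rpow_le_rpow_of_nonpos hνk h3 (neg_nonpos.2 (by positivity))
      have h5 : ((Δ k) ^ (-α)) ^ (-(1/α)) = Δ k := by
        rw [← Real.rpow_mul (hnn k)]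
        have : -α * -(1/α) = 1 := by field_simp
        rw [this, Real.rpow_one]
      have h6 : (ν * k) ^ (-(1/α)) = ν ^ (-(1/α)) * (k:ℝ) ^ (-(1/α)) :=
        Real.mul_rpow hνpos.le hkpos.le
      rw [h5, h6] at h4
      calc Δ k ≤ ν ^ (-(1/α)) * (k:ℝ) ^ (-(1/α)) := h4
      _ ≤ max (Δ 1 + 1) (ν ^ (-(1/α))) * (k:ℝ) ^ (-(1/α)) := by
          exact mul_le_mul_of_nonneg_right (le_max_right _ _)
            (Real.rpow_nonneg hkpos.le _)
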